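/- Coverage of the bias-aware fixed-length CI in the Gaussian model: if β̂ = a'Y with Y = wβ + Zγ + ε, ε ~ N(0, σ²Iₙ), a'w = 1, and |a'Zγ| ≤ B̄ for all γ ∈ Γ, then for every β ∈ R and γ ∈ Γ, P(|β̂ − β| ≤ cv_α(B̄/√V)·√V) ≥ 1 − α, where V = σ²a'a and cv_α(t) is the 1−α quantile of |N(t,1)|. -/

import Mathlib

open Matrix MeasureTheory ProbabilityTheory Real
open scoped NNReal ENNReal

section Helpers

lemma pdf_conv_pt (μ₁ μ₂ : ℝ) (p q : ℝ≥0) (hp : p ≠ 0) (hq : q ≠ 0) (z y : ℝ) :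
    gaussianPDFReal μ₁ p (z - y) * gaussianPDFReal μ₂ q y
      = gaussianPDFReal (μ₁ + μ₂) (p + q) z *
        gaussianPDFReal (μ₂ + (q:ℝ) * (z - μ₁ - μ₂) / ((p:ℝ) + q)) (p * q / (p + q)) y := by
  have hP : (0:ℝ) < p := by positivity
  have hQ : (0:ℝ) < q := by positivity
  have hPQ : (0:ℝ) < (p:ℝ) + q := by positivity
  have hcoe : ((p * q / (p + q) : ℝ≥0) : ℝ) = (p:ℝ) * q / ((p:ℝ) + q) := by push_cast; ring
  simp only [gaussianPDFReal, NNReal.coe_add, hcoe]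
  have h1 : ∀ A B s t : ℝ, A⁻¹ * rexp s * (B⁻¹ * rexp t) = (A * B)⁻¹ * rexp (s + t) := by
    intro A B s t; rw [Real.exp_add, mul_inv]; ring
  rw [h1, h1]
  congr 1
  · rw [← Real.sqrt_mul (by positivity), ← Real.sqrt_mul (by positivity)]
    congr 2
    field_simp
  · congr 1
    field_simp
    ring

lemma nnreal_aux (p q : ℝ≥0) (hp : p ≠ 0) (hq : q ≠ 0) : (p * q / (p + q) : ℝ≥0) ≠ 0 := by
  have hP : (0:ℝ) < p := by positivity
  have hQ : (0:ℝ) < q := by positivity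
  have : (0:ℝ) < ((p * q / (p + q) : ℝ≥0) : ℝ) := by push_cast; positivity
  exact fun h => by simp [h] at this

lemma integral_pdf_conv (μ₁ μ₂ : ℝ) (p q : ℝ≥0) (hp : p ≠ 0) (hq : q ≠ 0) (z : ℝ) :
    ∫ y, gaussianPDFReal μ₁ p (z - y) * gaussianPDFReal μ₂ q y
      = gaussianPDFReal (μ₁ + μ₂) (p + q) z := by
  simp_rw [pdf_conv_pt μ₁ μ₂ p q hp hq z]
  rw [MeasureTheory.integral_const_mul, integral_gaussianPDFReal_eq_one _ (nnreal_aux p q hp hq),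
    mul_one]

lemma gaussianPDFReal_le (μ : ℝ) (v : ℝ≥0) (x : ℝ) :
    gaussianPDFReal μ v x ≤ (Real.sqrt (2 * π * v))⁻¹ := by
  rw [gaussianPDFReal]
  have h1 : rexp (-(x - μ) ^ 2 / (2 * v)) ≤ 1 := by
    rw [Real.exp_le_one_iff]
    rcases eq_or_ne v 0 with h | h
    · simp [h]
    · have : (0:ℝ) < v := by positivity
      have : (0:ℝ) ≤ (x - μ)^2 := sq_nonneg _
      rw [div_nonpos_iff]
      right
      constructor <;> nlinarith
  calc (Real.sqrt (2 * π * v))⁻¹ * rexp (-(x - μ) ^ 2 / (2 * v))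
      ≤ (Real.sqrt (2 * π * v))⁻¹ * 1 := by
        apply mul_le_mul_of_nonneg_left h1
        positivity
    _ = _ := mul_one _

lemma map_add_prod_gaussian (μ₁ μ₂ : ℝ) (p q : ℝ≥0) :
    ((gaussianReal μ₁ p).prod (gaussianReal μ₂ q)).map (fun x : ℝ × ℝ => x.1 + x.2)
      = gaussianReal (μ₁ + μ₂) (p + q) := by
  by_cases hp : p = 0
  · subst hp
    rw [gaussianReal_zero_var, Measure.dirac_prod,
      Measure.map_map (by fun_prop : Measurable (fun x : ℝ × ℝ => x.1 + x.2)) measurable_prodMk_left]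
    have : ((fun x : ℝ × ℝ => x.1 + x.2) ∘ Prod.mk μ₁) = (fun y => μ₁ + y) := rfl
    rw [this, gaussianReal_map_const_add, add_comm μ₂ μ₁, zero_add]
  by_cases hq : q = 0
  · subst hq
    rw [gaussianReal_zero_var, Measure.prod_dirac,
      Measure.map_map (by fun_prop : Measurable (fun x : ℝ × ℝ => x.1 + x.2)) measurable_prodMk_right]
    have : ((fun x : ℝ × ℝ => x.1 + x.2) ∘ (fun x : ℝ => (x, μ₂))) = (fun y => y + μ₂) := rfl
    rw [this, gaussianReal_map_add_const, add_zero]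
  ext s hs
  rw [Measure.map_apply (by fun_prop : Measurable (fun x : ℝ × ℝ => x.1 + x.2)) hs,
    Measure.prod_apply (hs.preimage (by fun_prop : Measurable (fun x : ℝ × ℝ => x.1 + x.2)))]
  have h1 : ∀ x : ℝ, (gaussianReal μ₂ q) (Prod.mk x ⁻¹' ((fun z : ℝ × ℝ => z.1 + z.2) ⁻¹' s))
      = ∫⁻ z in s, ENNReal.ofReal (gaussianPDFReal μ₂ q (z - x)) := by
    intro x
    have hpre : Prod.mk x ⁻¹' ((fun z : ℝ × ℝ => z.1 + z.2) ⁻¹' s) = (fun y => x + y) ⁻¹' s := rfl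
    rw [hpre, ← Measure.map_apply (measurable_const_add x) hs, gaussianReal_map_const_add,
      gaussianReal_apply _ hq s]
    congr 1
    ext z
    rw [gaussianPDF, gaussianPDFReal_sub]
  simp_rw [h1]
  rw [gaussianReal_of_var_ne_zero μ₁ hp]
  have hjm : Measurable (fun pr : ℝ × ℝ => ENNReal.ofReal (gaussianPDFReal μ₂ q (pr.2 - pr.1))) :=
    (ENNReal.measurable_ofReal.comp
      ((measurable_gaussianPDFReal μ₂ q).comp (measurable_snd.sub measurable_fst)))
  have hgm : Measurable (fun x : ℝ => ∫⁻ z in s, ENNReal.ofReal (gaussianPDFReal μ₂ q (z - x))) := by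
    apply Measurable.lintegral_prod_right (f := fun x z => ENNReal.ofReal (gaussianPDFReal μ₂ q (z - x)))
    exact hjm
  rw [lintegral_withDensity_eq_lintegral_mul _ (measurable_gaussianPDF μ₁ p) hgm]
  have h2 : ∀ x : ℝ, (gaussianPDF μ₁ p * fun x => ∫⁻ z in s, ENNReal.ofReal (gaussianPDFReal μ₂ q (z - x))) x
      = ∫⁻ z in s, ENNReal.ofReal (gaussianPDFReal μ₁ p x * gaussianPDFReal μ₂ q (z - x)) := by
    intro x
    simp only [Pi.mul_apply, gaussianPDF]
    have hmz : Measurable (fun z : ℝ => ENNReal.ofReal (gaussianPDFReal μ₂ q (z - x))) := by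
      exact ENNReal.measurable_ofReal.comp
        ((measurable_gaussianPDFReal μ₂ q).comp (measurable_sub_const x))
    rw [← lintegral_const_mul _ hmz]
    congr 1
    ext z
    rw [← ENNReal.ofReal_mul (gaussianPDFReal_nonneg _ _ _)]
  simp_rw [h2]
  rw [lintegral_lintegral_swap]
  swap
  · have hmm : Measurable (fun pr : ℝ × ℝ =>
        ENNReal.ofReal (gaussianPDFReal μ₁ p pr.1 * gaussianPDFReal μ₂ q (pr.2 - pr.1))) := by
      exact ENNReal.measurable_ofReal.comp
        (((measurable_gaussianPDFReal μ₁ p).comp measurable_fst).mul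
          ((measurable_gaussianPDFReal μ₂ q).comp (measurable_snd.sub measurable_fst)))
    exact hmm.aemeasurable
  have h3 : ∀ z : ℝ, (∫⁻ x, ENNReal.ofReal (gaussianPDFReal μ₁ p x * gaussianPDFReal μ₂ q (z - x)))
      = ENNReal.ofReal (gaussianPDFReal (μ₁ + μ₂) (p + q) z) := by
    intro z
    rw [← MeasureTheory.ofReal_integral_eq_lintegral_ofReal]
    · congr 1
      rw [← integral_pdf_conv μ₁ μ₂ p q hp hq z]
      rw [← integral_sub_left_eq_self
        (fun x => gaussianPDFReal μ₁ p x * gaussianPDFReal μ₂ q (z - x)) volume z]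
      congr 1
      ext y
      rw [sub_sub_cancel]
    · apply Integrable.bdd_mul (c := (Real.sqrt (2 * π * p))⁻¹)
      · exact (integrable_gaussianPDFReal μ₂ q).comp_sub_left z
      · exact (measurable_gaussianPDFReal μ₁ p).aestronglyMeasurable
      · filter_upwards with x
        rw [Real.norm_eq_abs, abs_of_nonneg (gaussianPDFReal_nonneg _ _ _)]
        exact gaussianPDFReal_le _ _ _
    · filter_upwards with x
      exact mul_nonneg (gaussianPDFReal_nonneg _ _ _) (gaussianPDFReal_nonneg _ _ _)
  simp_rw [h3]
  rw [gaussianReal_apply _ (by simp [hp]) s]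
  rfl

end Helpers

section Sums

variable {Ω : Type*} [MeasurableSpace Ω] {P : Measure Ω} [IsProbabilityMeasure P]

lemma gaussian_sum {X Y : Ω → ℝ} (hX : Measurable X) (hY : Measurable Y)
    (hXY : IndepFun X Y P) {μ₁ μ₂ : ℝ} {p q : ℝ≥0}
    (h1 : P.map X = gaussianReal μ₁ p) (h2 : P.map Y = gaussianReal μ₂ q) :
    P.map (fun ω => X ω + Y ω) = gaussianReal (μ₁ + μ₂) (p + q) := by
  have hpair : P.map (fun ω => (X ω, Y ω)) = (P.map X).prod (P.map Y) :=
    (indepFun_iff_map_prod_eq_prod_map_map hX.aemeasurable hY.aemeasurable).mp hXY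
  have hc : (fun ω => X ω + Y ω) = (fun x : ℝ × ℝ => x.1 + x.2) ∘ (fun ω => (X ω, Y ω)) := rfl
  rw [hc, ← Measure.map_map (by fun_prop : Measurable (fun x : ℝ × ℝ => x.1 + x.2)) (hX.prodMk hY), hpair, h1, h2,
    map_add_prod_gaussian]

lemma gaussian_finset_sum {ι : Type*} [DecidableEq ι] {X : ι → Ω → ℝ} (hX : ∀ i, Measurable (X i))
    (hindep : iIndepFun X P) {μ : ι → ℝ} {v : ι → ℝ≥0}
    (h : ∀ i, P.map (X i) = gaussianReal (μ i) (v i)) (s : Finset ι) :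
    P.map (fun ω => ∑ i ∈ s, X i ω) = gaussianReal (∑ i ∈ s, μ i) (∑ i ∈ s, v i) := by
  induction s using Finset.induction_on with
  | empty =>
      simp only [Finset.sum_empty]
      rw [Measure.map_const, measure_univ, one_smul, ← gaussianReal_zero_var]
  | @insert i s hnotmem ih =>
      rw [Finset.sum_insert hnotmem, Finset.sum_insert hnotmem]
      have hsum_meas : Measurable (fun ω => ∑ j ∈ s, X j ω) := by
        exact Finset.measurable_sum s (fun j _ => hX j)
      have hind : IndepFun (∑ j ∈ s, X j) (X i) P :=
        hindep.indepFun_finset_sum_of_notMem hX hnotmem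
      have hind' : IndepFun (X i) (fun ω => ∑ j ∈ s, X j ω) P := by
        have : (∑ j ∈ s, X j) = (fun ω => ∑ j ∈ s, X j ω) := by
          funext ω; exact Finset.sum_apply ω s X
        rw [this] at hind
        exact hind.symm
      have := gaussian_sum (hX i) hsum_meas hind' (h i) ih
      simpa only [Finset.sum_insert hnotmem] using this

end Sums

/-- `cv α t`: the `1−α` quantile of `|N(t,1)|`. -/
noncomputable def cv (α t : ℝ) : ℝ :=
  sInf {c : ℝ | 1 - α ≤ ((gaussianReal t 1) {x : ℝ | |x| ≤ c}).toReal}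

lemma measurableSet_absLe (c : ℝ) : MeasurableSet {x : ℝ | |x| ≤ c} :=
  (isClosed_le continuous_abs continuous_const).measurableSet

lemma absLe_mono {c c' : ℝ} (h : c ≤ c') : {x : ℝ | |x| ≤ c} ⊆ {x : ℝ | |x| ≤ c'} :=
  fun x hx => le_trans hx h

lemma cv_spec (α t : ℝ) (hα0 : 0 < α) (hα1 : α < 1) :
    0 ≤ cv α t ∧ 1 - α ≤ ((gaussianReal t 1) {x : ℝ | |x| ≤ cv α t}).toReal := by
  set ν := gaussianReal t 1 with hν
  set S := {c : ℝ | 1 - α ≤ (ν {x : ℝ | |x| ≤ c}).toReal} with hS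
  -- nonemptiness
  have hne : S.Nonempty := by
    have hmono : Monotone (fun n : ℕ => {x : ℝ | |x| ≤ (n:ℝ)}) := by
      intro m n hmn
      exact absLe_mono (by exact_mod_cast hmn)
    have htend : Filter.Tendsto (fun n : ℕ => ν {x : ℝ | |x| ≤ (n:ℝ)}) Filter.atTop
        (nhds (ν (⋃ n : ℕ, {x : ℝ | |x| ≤ (n:ℝ)}))) :=
      tendsto_measure_iUnion_atTop hmono
    have hU : (⋃ n : ℕ, {x : ℝ | |x| ≤ (n:ℝ)}) = Set.univ := by
      ext x
      simp only [Set.mem_iUnion, Set.mem_setOf_eq, Set.mem_univ, iff_true]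
      obtain ⟨n, hn⟩ := exists_nat_ge |x|
      exact ⟨n, hn⟩
    rw [hU, measure_univ] at htend
    have hlt : ENNReal.ofReal (1 - α) < 1 := by
      rw [← ENNReal.ofReal_one]
      exact ENNReal.ofReal_lt_ofReal_iff_of_nonneg (by linarith) |>.mpr (by linarith)
    have hev := htend.eventually (eventually_ge_nhds hlt)
    obtain ⟨n, hn⟩ := hev.exists
    refine ⟨(n:ℝ), ?_⟩
    rw [hS, Set.mem_setOf_eq]
    rw [← ENNReal.ofReal_le_iff_le_toReal (measure_ne_top ν _)] at *
    exact hn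
  have hbdd : ∀ c ∈ S, 0 ≤ c := by
    intro c hc
    by_contra hneg
    push_neg at hneg
    have hempty : {x : ℝ | |x| ≤ c} = ∅ := by
      ext x
      simp only [Set.mem_setOf_eq, Set.mem_empty_iff_false, iff_false, not_le]
      exact lt_of_lt_of_le hneg (abs_nonneg x)
    rw [hS, Set.mem_setOf_eq, hempty] at hc
    simp only [measure_empty, ENNReal.toReal_zero] at hc
    linarith
  have hcv0 : 0 ≤ cv α t := le_csInf hne hbdd
  refine ⟨hcv0, ?_⟩
  -- for every n, cv + 1/(n+1) has enough mass
  have key : ∀ n : ℕ, ENNReal.ofReal (1 - α) ≤ ν {x : ℝ | |x| ≤ cv α t + 1 / (n + 1)} := by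
    intro n
    obtain ⟨c, hcS, hclt⟩ := Real.lt_sInf_add_pos hne (show (0:ℝ) < 1 / (n+1) by positivity)
    have h1 : ENNReal.ofReal (1 - α) ≤ ν {x : ℝ | |x| ≤ c} := by
      rw [ENNReal.ofReal_le_iff_le_toReal (measure_ne_top ν _)]
      exact hcS
    exact le_trans h1 (measure_mono (absLe_mono hclt.le))
  have hanti : Antitone (fun n : ℕ => {x : ℝ | |x| ≤ cv α t + 1 / (n + 1)}) := by
    intro m n hmn
    apply absLe_mono
    have : (1:ℝ) / (n + 1) ≤ 1 / (m + 1) := by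
      apply one_div_le_one_div_of_le (by positivity)
      exact_mod_cast Nat.succ_le_succ hmn
    linarith
  have htend : Filter.Tendsto (fun n : ℕ => ν {x : ℝ | |x| ≤ cv α t + 1 / (n + 1)}) Filter.atTop
      (nhds (ν (⋂ n : ℕ, {x : ℝ | |x| ≤ cv α t + 1 / (n + 1)}))) :=
    tendsto_measure_iInter_atTop (fun n => (measurableSet_absLe _).nullMeasurableSet) hanti
      ⟨0, measure_ne_top _ _⟩
  have hI : (⋂ n : ℕ, {x : ℝ | |x| ≤ cv α t + 1 / (n + 1)}) = {x : ℝ | |x| ≤ cv α t} := by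
    ext x
    simp only [Set.mem_iInter, Set.mem_setOf_eq]
    constructor
    · intro h
      apply le_of_forall_pos_le_add
      intro ε hε
      obtain ⟨n, hn⟩ := exists_nat_one_div_lt hε
      exact le_trans (h n) (by linarith [hn])
    · intro h n
      have : (0:ℝ) < 1 / (n + 1) := by positivity
      linarith
  rw [hI] at htend
  have hlim : ENNReal.ofReal (1 - α) ≤ ν {x : ℝ | |x| ≤ cv α t} := ge_of_tendsto' htend key
  rw [← ENNReal.ofReal_le_iff_le_toReal (measure_ne_top ν _)]
  exact hlim

section Mono

lemma phi_cont : Continuous (gaussianPDFReal 0 1) := by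
  unfold gaussianPDFReal
  fun_prop

lemma phi_le {u w : ℝ} (h : |w| ≤ |u|) : gaussianPDFReal 0 1 u ≤ gaussianPDFReal 0 1 w := by
  simp only [gaussianPDFReal, sub_zero]
  apply mul_le_mul_of_nonneg_left _ (by positivity)
  apply Real.exp_le_exp.2
  have h2 : w ^ 2 ≤ u ^ 2 := by
    have := pow_le_pow_left₀ (abs_nonneg w) h 2
    rwa [sq_abs, sq_abs] at this
  have hone : ((1:ℝ≥0):ℝ) = 1 := rfl
  rw [hone]
  linarith

noncomputable def Phi0 (u : ℝ) : ℝ := ∫ x in (0:ℝ)..u, gaussianPDFReal 0 1 x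

lemma Phi0_hasDerivAt (u : ℝ) : HasDerivAt Phi0 (gaussianPDFReal 0 1 u) u :=
  intervalIntegral.integral_hasDerivAt_right
    (integrable_gaussianPDFReal 0 1).intervalIntegrable
    phi_cont.aestronglyMeasurable.stronglyMeasurableAtFilter
    phi_cont.continuousAt

lemma J_shift (c s : ℝ) :
    (∫ x in (-c)..c, gaussianPDFReal s 1 x) = Phi0 (c - s) - Phi0 (-c - s) := by
  have h1 : ∀ x : ℝ, gaussianPDFReal s 1 x = gaussianPDFReal 0 1 (x - s) := by
    intro x
    rw [gaussianPDFReal_sub, zero_add]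
  simp_rw [h1]
  rw [intervalIntegral.integral_comp_sub_right (fun x => gaussianPDFReal 0 1 x) s, Phi0, Phi0,
    intervalIntegral.integral_interval_sub_left
      (integrable_gaussianPDFReal 0 1).intervalIntegrable
      (integrable_gaussianPDFReal 0 1).intervalIntegrable]

end Mono

lemma J_anti {c : ℝ} (hc : 0 ≤ c) :
    AntitoneOn (fun s => ∫ x in (-c)..c, gaussianPDFReal s 1 x) (Set.Ici (0:ℝ)) := by
  have hH : ∀ s : ℝ, HasDerivAt (fun s => Phi0 (c - s) - Phi0 (-c - s))
      (gaussianPDFReal 0 1 (-c - s) - gaussianPDFReal 0 1 (c - s)) s := by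
    intro s
    have hi1 : HasDerivAt (fun s : ℝ => c - s) (-1) s := (hasDerivAt_id s).const_sub c
    have hi2 : HasDerivAt (fun s : ℝ => -c - s) (-1) s := (hasDerivAt_id s).const_sub (-c)
    have h1 : HasDerivAt (fun s => Phi0 (c - s)) (gaussianPDFReal 0 1 (c - s) * (-1)) s :=
      (Phi0_hasDerivAt (c - s)).comp s hi1
    have h2 : HasDerivAt (fun s => Phi0 (-c - s)) (gaussianPDFReal 0 1 (-c - s) * (-1)) s :=
      (Phi0_hasDerivAt (-c - s)).comp s hi2
    have := h1.sub h2
    exact this.congr_deriv (by ring)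
  have hfun : (fun s => ∫ x in (-c)..c, gaussianPDFReal s 1 x)
      = fun s => Phi0 (c - s) - Phi0 (-c - s) := by
    funext s
    exact J_shift c s
  rw [hfun]
  apply antitoneOn_of_deriv_nonpos (convex_Ici 0)
  · exact (continuous_iff_continuousAt.mpr fun s => (hH s).differentiableAt.continuousAt).continuousOn
  · exact fun s _ => (hH s).differentiableAt.differentiableWithinAt
  · intro s hs
    rw [interior_Ici, Set.mem_Ioi] at hs
    rw [(hH s).deriv]
    have hle : |c - s| ≤ |-c - s| := by
      rw [abs_le]
      rcases abs_cases (-c - s) with ⟨h, _⟩ | ⟨h, _⟩ <;> constructor <;> nlinarith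
    linarith [phi_le hle]

lemma J_even (c s : ℝ) :
    (∫ x in (-c)..c, gaussianPDFReal (-s) 1 x) = ∫ x in (-c)..c, gaussianPDFReal s 1 x := by
  have h1 : ∀ x : ℝ, gaussianPDFReal (-s) 1 x = gaussianPDFReal s 1 (-x) := by
    intro x
    simp only [gaussianPDFReal]
    congr 2
    ring
  simp_rw [h1]
  rw [intervalIntegral.integral_comp_neg (fun x => gaussianPDFReal s 1 x), neg_neg]

lemma gauss_toReal (t c : ℝ) (hc : 0 ≤ c) :
    ((gaussianReal t 1) {x : ℝ | |x| ≤ c}).toReal = ∫ x in (-c)..c, gaussianPDFReal t 1 x := by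
  have hset : {x : ℝ | |x| ≤ c} = Set.Icc (-c) c := by
    ext x; simp [abs_le]
  rw [hset, gaussianReal_apply_eq_integral t one_ne_zero, ENNReal.toReal_ofReal
    (setIntegral_nonneg measurableSet_Icc fun x _ => gaussianPDFReal_nonneg _ _ _),
    intervalIntegral.integral_of_le (by linarith : -c ≤ c), integral_Icc_eq_integral_Ioc]

lemma gauss_mono {b t c : ℝ} (hc : 0 ≤ c) (hbt : |b| ≤ t) :
    ((gaussianReal t 1) {x : ℝ | |x| ≤ c}).toReal
      ≤ ((gaussianReal b 1) {x : ℝ | |x| ≤ c}).toReal := by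
  have ht0 : 0 ≤ t := le_trans (abs_nonneg b) hbt
  rw [gauss_toReal t c hc, gauss_toReal b c hc]
  rcases le_or_gt 0 b with hb | hb
  · exact J_anti hc (Set.mem_Ici.mpr hb) (Set.mem_Ici.mpr ht0) (le_trans (le_abs_self b) hbt)
  · have hnb : 0 ≤ -b := by linarith
    have hle : -b ≤ t := by rw [abs_of_neg hb] at hbt; exact hbt
    have h2 := J_anti hc (Set.mem_Ici.mpr hnb) (Set.mem_Ici.mpr ht0) hle
    simp only at h2
    rwa [show -b = -b from rfl, J_even c b] at h2


/-- Coverage of the bias-aware fixed-length CI in the Gaussian model: if `β̂ = a'Y` with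
`Y = wβ + Zγ + ε`, `ε ~ N(0, σ²Iₙ)`, `a'w = 1` and `|a'Zγ| ≤ B̄` on `Γ`, then for every
`β ∈ ℝ` and `γ ∈ Γ`, `P(|β̂ − β| ≤ cv_α(B̄/√V)·√V) ≥ 1 − α` where `V = σ²a'a`. -/
theorem bias_aware_flci_coverage {n k : ℕ}
    (w : Fin n → ℝ) (Z : Matrix (Fin n) (Fin k) ℝ) (a : Fin n → ℝ) (ha : a ≠ 0)
    (haw : a ⬝ᵥ w = 1)
    (Γ : Set (Fin k → ℝ)) (Bbar : ℝ) (hB : 0 ≤ Bbar)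
    (hbias : ∀ γ ∈ Γ, |a ⬝ᵥ (Z *ᵥ γ)| ≤ Bbar)
    (σ : ℝ) (hσ : 0 < σ) (α : ℝ) (hα0 : 0 < α) (hα1 : α < 1)
    {Ω : Type*} [MeasureSpace Ω] (P : Measure Ω) [IsProbabilityMeasure P]
    (ε : Ω → Fin n → ℝ) (hmeas : ∀ i, Measurable fun ω => ε ω i)
    (hindep : iIndepFun (fun i ω => ε ω i) P)
    (hgauss : ∀ i, P.map (fun ω => ε ω i) = gaussianReal 0 (σ ^ 2).toNNReal)
    (β : ℝ) (γ : Fin k → ℝ) (hγ : γ ∈ Γ)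
    (Y : Ω → Fin n → ℝ) (hY : ∀ ω, Y ω = β • w + Z *ᵥ γ + ε ω)
    (V : ℝ) (hV : V = σ ^ 2 * (a ⬝ᵥ a)) :
    1 - α ≤ (P {ω | |a ⬝ᵥ Y ω - β| ≤ cv α (Bbar / Real.sqrt V) * Real.sqrt V}).toReal := by
  classical
  -- positivity of variance
  have haa : 0 < a ⬝ᵥ a := by
    have h0 : 0 ≤ a ⬝ᵥ a := Finset.sum_nonneg fun i _ => mul_self_nonneg (a i)
    rcases h0.lt_or_eq with h | h
    · exact h
    · exact absurd (dotProduct_self_eq_zero.mp h.symm) ha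
  have hV0 : 0 < V := hV ▸ mul_pos (pow_pos hσ 2) haa
  set sV := Real.sqrt V with hsVdef
  have hsV : 0 < sV := Real.sqrt_pos.mpr hV0
  set m := a ⬝ᵥ (Z *ᵥ γ) with hm
  set t := Bbar / sV with ht
  -- law of the weighted sum of noise
  set g : Fin n → Ω → ℝ := fun i ω => a i * ε ω i with hg
  have hgmeas : ∀ i, Measurable (g i) := fun i => (hmeas i).const_mul (a i)
  have hgindep : iIndepFun g P := by
    have := hindep.comp (fun i (x : ℝ) => a i * x) (fun i => measurable_const_mul (a i))
    exact this
  set v : Fin n → ℝ≥0 := fun i => ⟨(a i)^2, sq_nonneg _⟩ * (σ^2).toNNReal with hv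
  have hglaw : ∀ i, P.map (g i) = gaussianReal 0 (v i) := by
    intro i
    have h1 : g i = (fun x => a i * x) ∘ (fun ω => ε ω i) := rfl
    rw [h1, ← Measure.map_map (measurable_const_mul (a i)) (hmeas i), hgauss i,
      gaussianReal_map_const_mul, mul_zero]
    rfl
  have hSlaw : P.map (fun ω => ∑ i, a i * ε ω i) = gaussianReal 0 (∑ i, v i) := by
    have := gaussian_finset_sum hgmeas hgindep hglaw Finset.univ
    simpa using this
  -- identify variance
  have hVnn : ((∑ i, v i : ℝ≥0) : ℝ) = V := by
    have hvi : ∀ i, ((v i : ℝ≥0) : ℝ) = (a i)^2 * σ^2 := by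
      intro i
      rw [hv]
      change (a i)^2 * ((σ^2).toNNReal : ℝ) = _
      rw [Real.coe_toNNReal _ (sq_nonneg σ)]
    rw [NNReal.coe_sum]
    simp only [hvi]
    rw [hV, dotProduct, Finset.mul_sum]
    apply Finset.sum_congr rfl
    intro i _
    ring
  -- the statistic
  set T : Ω → ℝ := fun ω => a ⬝ᵥ Y ω - β with hT
  have hTe : T = fun ω => (∑ i, a i * ε ω i) + m := by
    funext ω
    rw [hT]
    simp only [hY ω, dotProduct_add]
    have h1 : a ⬝ᵥ (β • w) = β * (a ⬝ᵥ w) := by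
      rw [dotProduct_smul]; simp [smul_eq_mul]
    have h2 : a ⬝ᵥ (ε ω) = ∑ i, a i * ε ω i := rfl
    rw [h1, haw, h2, hm]
    ring
  have hSmeas : Measurable (fun ω => ∑ i, a i * ε ω i) :=
    Finset.measurable_sum Finset.univ (fun i _ => (hmeas i).const_mul (a i))
  have hTmeas : Measurable T := by rw [hTe]; exact hSmeas.add_const m
  have hTlaw : P.map T = gaussianReal m (∑ i, v i) := by
    rw [hTe]
    have h1 : (fun ω => (∑ i, a i * ε ω i) + m) = (· + m) ∘ (fun ω => ∑ i, a i * ε ω i) := rfl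
    rw [h1, ← Measure.map_map (measurable_add_const m) hSmeas, hSlaw,
      gaussianReal_map_add_const, zero_add]
  -- event rewriting
  set r := cv α t * sV with hr
  have hPev : P {ω | |a ⬝ᵥ Y ω - β| ≤ r} = (P.map T) {x : ℝ | |x| ≤ r} := by
    rw [Measure.map_apply hTmeas (measurableSet_absLe r)]
    rfl
  -- scaling
  have hscale : gaussianReal m (∑ i, v i) {x : ℝ | |x| ≤ r}
      = gaussianReal (m / sV) 1 {x : ℝ | |x| ≤ cv α t} := by
    have hmap : (gaussianReal (m / sV) 1).map (fun x => sV * x)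
        = gaussianReal m (∑ i, v i) := by
      rw [gaussianReal_map_const_mul sV, mul_div_cancel₀ _ (ne_of_gt hsV)]
      congr 1
      apply NNReal.coe_injective
      rw [NNReal.coe_mul, NNReal.coe_one, NNReal.coe_mk, hVnn, hsVdef, Real.sq_sqrt hV0.le,
        mul_one]
    rw [← hmap, Measure.map_apply (measurable_const_mul sV) (measurableSet_absLe r)]
    congr 1
    ext y
    simp only [Set.mem_preimage, Set.mem_setOf_eq, hr]
    rw [abs_mul, abs_of_pos hsV, mul_comm (cv α t) sV]
    exact mul_le_mul_iff_of_pos_left hsV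
  -- final chain
  rw [hPev, hTlaw, hscale]
  have hb : |m / sV| ≤ t := by
    rw [ht, abs_div, abs_of_pos hsV]
    gcongr
    exact hbias γ hγ
  obtain ⟨hcv0, hcv1⟩ := cv_spec α t hα0 hα1
  calc 1 - α ≤ ((gaussianReal t 1) {x : ℝ | |x| ≤ cv α t}).toReal := hcv1
    _ ≤ ((gaussianReal (m / sV) 1) {x : ℝ | |x| ≤ cv α t}).toReal := gauss_mono hcv0 hb
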